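/- Let F be a face of Q and b ∈ F with b + Q^F ⊆ Q. Then Q ∩ (b + Q^sat) = b + Q^F. -/
import Mathlib

/-- The shift `α + S = {α + s : s ∈ S}` of a set `S ⊆ ℤ^d` by `α ∈ ℤ^d`. -/
def shiftSet {d : ℕ} (α : Fin d → ℤ) (S : Set (Fin d → ℤ)) : Set (Fin d → ℤ) :=
  (α + ·) '' S

/-- A face of `Q`: a submonoid `F ⊆ Q` such that `a + b ∈ F` with `a, b ∈ Q` forces
`a ∈ F` and `b ∈ F`. -/
def IsFaceOfMonoid {d : ℕ} (Q F : AddSubmonoid (Fin d → ℤ)) : Prop :=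
  (F : Set (Fin d → ℤ)) ⊆ (Q : Set (Fin d → ℤ)) ∧
    ∀ a ∈ Q, ∀ b ∈ Q, a + b ∈ F → a ∈ F ∧ b ∈ F

/-- The saturation `Q^sat = {x ∈ ℤ^d : n • x ∈ Q for some integer n ≥ 1}`. -/
def saturationOf {d : ℕ} (Q : AddSubmonoid (Fin d → ℤ)) : Set (Fin d → ℤ) :=
  {x | ∃ n : ℕ, 1 ≤ n ∧ n • x ∈ Q}

/-- The partial saturation `Q^F = (Q + F^gp) ∩ Q^sat` of `Q` at a face `F`. -/
def partialSat {d : ℕ} (Q F : AddSubmonoid (Fin d → ℤ)) : Set (Fin d → ℤ) :=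
  {x | ∃ q ∈ Q, ∃ g ∈ AddSubgroup.closure (F : Set (Fin d → ℤ)), x = q + g} ∩
    saturationOf Q

/-- Let `F` be a face of `Q` and `b ∈ F` with `b + Q^F ⊆ Q`.  Then
`Q ∩ (b + Q^sat) = b + Q^F`. -/
theorem stmt11 {d : ℕ} (Q : AddSubmonoid (Fin d → ℤ)) (hFG : Q.FG)
    (hgp : AddSubgroup.closure (Q : Set (Fin d → ℤ)) = ⊤)
    (F : AddSubmonoid (Fin d → ℤ)) (hF : IsFaceOfMonoid Q F)
    (b : Fin d → ℤ) (hb : b ∈ F)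
    (hbQ : ∀ x ∈ partialSat Q F, b + x ∈ Q) :
    (Q : Set (Fin d → ℤ)) ∩ shiftSet b (saturationOf Q) =
      shiftSet b (partialSat Q F) := by
  ext x
  constructor
  · rintro ⟨hxQ, s, hs, rfl⟩
    exact ⟨s, ⟨⟨b + s, hxQ, -b,
      AddSubgroup.neg_mem _ (AddSubgroup.subset_closure hb), by abel⟩, hs⟩, rfl⟩
  · rintro ⟨s, hs, rfl⟩
    exact ⟨hbQ s hs, s, hs.2, rfl⟩
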